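/- Let H be a Hilbert space, x ∈ H, δ > 0, and let f: H → ℝ^d be Lipschitz continuous with constant L. Let z₁, …, z_n be i.i.d. random samples drawn from a probability measure on H whose support is contained in the ball B_δ(x) of radius δ about x. Then for any ε > 0, with probability at least 1 − 2d·exp(−n·ε²/(2L²δ²)), the deviation of f(x) from the sample mean of the embedded samples is bounded as ‖f(x) − (1/n)·Σ_{i=1}^n f(z_i)‖ ≤ Lδ + √d·ε. -/

import Mathlib

open MeasureTheory ProbabilityTheory Metric

/-- If `f : H → ℝ^d` is `L`-Lipschitz and `z₁, …, z_n` are i.i.d. samples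
from a probability measure supported in the ball `B_δ(x)`, then with probability at
least `1 − 2d·exp(−nε²/(2L²δ²))` the deviation of `f x` from the sample mean of the
embedded samples is at most `Lδ + √d·ε`. -/
theorem lipschitz_embedding_sample_mean_deviation
    {H : Type*} [NormedAddCommGroup H] [InnerProductSpace ℝ H]
    [MeasurableSpace H] [BorelSpace H]
    (x : H) (δ : ℝ) (hδ : 0 < δ)
    {d : ℕ} (f : H → EuclideanSpace ℝ (Fin d)) (L : ℝ) (hL : 0 < L)
    (hf : ∀ a b : H, ‖f a - f b‖ ≤ L * ‖a - b‖)
    {Ω : Type*} [MeasurableSpace Ω] (P : Measure Ω) [IsProbabilityMeasure P]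
    (n : ℕ) (z : Fin n → Ω → H)
    (hzmeas : ∀ i, Measurable (z i))
    (μ : Measure H) [IsProbabilityMeasure μ]
    (hsupp : μ (ball x δ)ᶜ = 0)
    (hdist : ∀ i, Measure.map (z i) P = μ)
    (hiid : iIndepFun z P)
    (ε : ℝ) (hε : 0 < ε) :
    ENNReal.ofReal (1 - 2 * d * Real.exp (-(n * ε ^ 2 / (2 * L ^ 2 * δ ^ 2))))
      ≤ P {ω | ‖f x - (n : ℝ)⁻¹ • ∑ i, f (z i ω)‖ ≤ L * δ + Real.sqrt d * ε} := by
  have hofReal_le_one :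
      ENNReal.ofReal (1 - 2 * d * Real.exp (-(n * ε ^ 2 / (2 * L ^ 2 * δ ^ 2)))) ≤ 1 := by
    apply ENNReal.ofReal_le_one.mpr
    have h := Real.exp_pos (-(n * ε ^ 2 / (2 * L ^ 2 * δ ^ 2)))
    have hd : (0:ℝ) ≤ (d:ℝ) := Nat.cast_nonneg d
    nlinarith
  rcases Nat.eq_zero_or_pos n with hn | hn
  · subst hn
    rcases Nat.eq_zero_or_pos d with hd | hd
    · subst hd
      have hset : {ω : Ω | ‖f x - (0 : ℝ)⁻¹ • ∑ i : Fin 0, f (z i ω)‖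
          ≤ L * δ + Real.sqrt 0 * ε} = Set.univ := by
        ext ω
        simp only [Set.mem_setOf_eq, Set.mem_univ, iff_true]
        have : f x - (0 : ℝ)⁻¹ • ∑ i : Fin 0, f (z i ω) = 0 := Subsingleton.elim _ _
        rw [this, norm_zero, Real.sqrt_zero]
        nlinarith
      rw [Nat.cast_zero, hset, measure_univ]
      exact_mod_cast hofReal_le_one
    · have : ENNReal.ofReal
          (1 - 2 * d * Real.exp (-((0:ℕ) * ε ^ 2 / (2 * L ^ 2 * δ ^ 2)))) = 0 := by
        apply ENNReal.ofReal_eq_zero.mpr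
        have : -((0:ℝ) * ε ^ 2 / (2 * L ^ 2 * δ ^ 2)) = 0 := by ring
        rw [Nat.cast_zero, this, Real.exp_zero]
        have : (1:ℝ) ≤ (d:ℝ) := by exact_mod_cast hd
        nlinarith
      rw [this]
      exact zero_le
  · -- n > 0 : the event holds almost surely
    set A : Set Ω := {ω | ∀ i, z i ω ∈ ball x δ} with hA_def
    have hAmeas : MeasurableSet A := by
      have : A = ⋂ i, z i ⁻¹' (ball x δ) := by
        ext ω; simp [hA_def]
      rw [this]
      exact MeasurableSet.iInter fun i => (hzmeas i) measurableSet_ball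
    have hAc : P Aᶜ = 0 := by
      have hsub : Aᶜ ⊆ ⋃ i, z i ⁻¹' (ball x δ)ᶜ := by
        intro ω hω
        simp only [hA_def, Set.mem_compl_iff, Set.mem_setOf_eq, not_forall] at hω
        obtain ⟨i, hi⟩ := hω
        exact Set.mem_iUnion.mpr ⟨i, hi⟩
      refine measure_mono_null hsub (measure_iUnion_null fun i => ?_)
      rw [← Measure.map_apply (hzmeas i) measurableSet_ball.compl, hdist i, hsupp]
    have hPA : P A = 1 := by
      have := measure_add_measure_compl hAmeas (μ := P)
      rw [hAc, add_zero, measure_univ] at this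
      exact this
    have hsub : A ⊆ {ω | ‖f x - (n : ℝ)⁻¹ • ∑ i, f (z i ω)‖ ≤ L * δ + Real.sqrt d * ε} := by
      intro ω hω
      simp only [Set.mem_setOf_eq]
      have hn' : (n:ℝ) ≠ 0 := by positivity
      have hfx : f x = (n : ℝ)⁻¹ • ∑ _i : Fin n, f x := by
        rw [Finset.sum_const, Finset.card_univ, Fintype.card_fin,
          ← Nat.cast_smul_eq_nsmul ℝ, smul_smul, inv_mul_cancel₀ hn', one_smul]
      have key : ‖f x - (n : ℝ)⁻¹ • ∑ i, f (z i ω)‖ ≤ L * δ := by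
        calc ‖f x - (n : ℝ)⁻¹ • ∑ i, f (z i ω)‖
            = ‖(n : ℝ)⁻¹ • ∑ i : Fin n, (f x - f (z i ω))‖ := by
              rw [Finset.sum_sub_distrib, smul_sub, ← hfx]
          _ = (n:ℝ)⁻¹ * ‖∑ i : Fin n, (f x - f (z i ω))‖ := by
              rw [norm_smul, Real.norm_eq_abs, abs_of_nonneg (by positivity)]
          _ ≤ (n:ℝ)⁻¹ * ∑ i : Fin n, ‖f x - f (z i ω)‖ := by
              gcongr
              exact norm_sum_le _ _
          _ ≤ (n:ℝ)⁻¹ * ∑ _i : Fin n, (L * δ) := by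
              refine mul_le_mul_of_nonneg_left
                (Finset.sum_le_sum fun i _ => ?_) (by positivity)
              refine (hf x (z i ω)).trans ?_
              have : ‖x - z i ω‖ < δ := by
                have := hω i
                rw [mem_ball, dist_eq_norm] at this
                rwa [norm_sub_rev]
              nlinarith
          _ = L * δ := by
              rw [Finset.sum_const, Finset.card_univ, Fintype.card_fin, nsmul_eq_mul]
              field_simp
      have : (0:ℝ) ≤ Real.sqrt d * ε := by positivity
      linarith
    calc ENNReal.ofReal (1 - 2 * d * Real.exp (-(n * ε ^ 2 / (2 * L ^ 2 * δ ^ 2))))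
        ≤ 1 := hofReal_le_one
      _ = P A := hPA.symm
      _ ≤ _ := measure_mono hsub
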